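/- arXiv:0804.0326 — 2 statements merged into one kernel-verified Lean document; each statement's English description precedes it below -/
import Mathlib

section
/- For every 𝒯-category (X,a), every presheaf ψ ∈ X̂ and every 𝔵 ∈ TX one has ψ(𝔵) = ⟦T y_X(𝔵), ψ⟧, i.e. the 𝒯-module (y_X)_*: X ⇸∘ X̂ is given by the evaluation map; as a consequence, the Yoneda functor y_X: X → X̂ is fully faithful. -/
universe u

namespace Paper

/-- A strict topological theory `𝒯 = (𝕋, V, ξ)`: a commutative unital quantale `V`
(a complete lattice with a commutative monoid structure whose multiplication preserves
suprema in each variable, with `⊥ < k`), a `Set`-monad `𝕋 = (T, e, m)` such that `T`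
sends pullbacks to weak pullbacks and the naturality squares of `m` are weak pullbacks,
and a `𝕋`-algebra structure `ξ : T V → V` for which `⊗` and `k` are `𝕋`-algebra
homomorphisms and `ξ_X := ξ ∘ T(-)` is a (monotone) natural transformation
`P_V → P_V T`. -/
structure TopTheory (V : Type u) [CompleteLattice V] (T : Type u → Type u) where
  tens : V → V → V
  unit : V
  tens_comm : ∀ u v : V, tens u v = tens v u
  tens_assoc : ∀ u v w : V, tens (tens u v) w = tens u (tens v w)
  unit_tens : ∀ v : V, tens unit v = v
  tens_sSup : ∀ (u : V) (S : Set V), tens u (sSup S) = ⨆ v ∈ S, tens u v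
  bot_lt_unit : (⊥ : V) < unit
  map : ∀ {X Y : Type u}, (X → Y) → T X → T Y
  map_id : ∀ {X : Type u}, map (id : X → X) = id
  map_comp : ∀ {X Y Z : Type u} (g : Y → Z) (f : X → Y) (𝔵 : T X),
    map (g ∘ f) 𝔵 = map g (map f 𝔵)
  e : ∀ {X : Type u}, X → T X
  m : ∀ {X : Type u}, T (T X) → T X
  e_nat : ∀ {X Y : Type u} (f : X → Y) (x : X), map f (e x) = e (f x)
  m_nat : ∀ {X Y : Type u} (f : X → Y) (𝔛 : T (T X)), map f (m 𝔛) = m (map (map f) 𝔛)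
  m_e : ∀ {X : Type u} (𝔵 : T X), m (e 𝔵) = 𝔵
  m_map_e : ∀ {X : Type u} (𝔵 : T X), m (map e 𝔵) = 𝔵
  m_assoc : ∀ {X : Type u} (𝔜 : T (T (T X))), m (m 𝔜) = m (map m 𝔜)
  /-- (BC): `T` sends pullbacks to weak pullbacks. -/
  map_bc : ∀ {X Y Z : Type u} (f : X → Z) (g : Y → Z) (𝔵 : T X) (𝔶 : T Y),
    map f 𝔵 = map g 𝔶 →
    ∃ 𝔴 : T {p : X × Y // f p.1 = g p.2},
      map (fun p => p.1.1) 𝔴 = 𝔵 ∧ map (fun p => p.1.2) 𝔴 = 𝔶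
  /-- (BC): every naturality square of `m` is a weak pullback. -/
  m_bc : ∀ {X Y : Type u} (f : X → Y) (𝔜 : T (T Y)) (𝔵 : T X),
    m 𝔜 = map f 𝔵 → ∃ 𝔛 : T (T X), map (map f) 𝔛 = 𝔜 ∧ m 𝔛 = 𝔵
  xi : T V → V
  xi_e : ∀ v : V, xi (e v) = v
  xi_m : ∀ 𝔙 : T (T V), xi (m 𝔙) = xi (map xi 𝔙)
  /-- `k : 1 → V` is a `𝕋`-algebra homomorphism. -/
  xi_unit : ∀ {X : Type u} (𝔵 : T X), xi (map (fun _ => unit) 𝔵) = unit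
  /-- `⊗ : V × V → V` is a `𝕋`-algebra homomorphism. -/
  xi_tens : ∀ 𝔴 : T (V × V),
    xi (map (fun p => tens p.1 p.2) 𝔴) = tens (xi (map Prod.fst 𝔴)) (xi (map Prod.snd 𝔴))
  /-- each component `ξ_X : V^X → V^{T X}` is monotone. -/
  xi_mono : ∀ {X : Type u} (φ φ' : X → V), (∀ x, φ x ≤ φ' x) →
    ∀ 𝔵 : T X, xi (map φ 𝔵) ≤ xi (map φ' 𝔵)
  /-- `ξ_X` is a natural transformation `P_V → P_V T`. -/
  xi_nat : ∀ {X Y : Type u} (f : X → Y) (φ : X → V) (𝔶 : T Y),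
    (⨆ 𝔵 : {𝔵 : T X // map f 𝔵 = 𝔶}, xi (map φ 𝔵.1)) =
      xi (map (fun y => ⨆ x : {x : X // f x = y}, φ x.1) 𝔶)

namespace TopTheory

variable {V : Type u} [CompleteLattice V] {T : Type u → Type u}

/-- The internal hom of the quantale: `u ⊗ (-) ⊣ hom (u, -)`. -/
def ihom (𝒯 : TopTheory V T) (u w : V) : V := sSup {z | 𝒯.tens u z ≤ w}

/-- The extension `T_ξ` of `T : Set → Set` to `V`-relations. -/
def Txi (𝒯 : TopTheory V T) {X Y : Type u} (r : X → Y → V) (𝔵 : T X) (𝔶 : T Y) : V :=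
  ⨆ 𝔴 : {w : T (X × Y) // 𝒯.map Prod.fst w = 𝔵 ∧ 𝒯.map Prod.snd w = 𝔶},
    𝒯.xi (𝒯.map (fun p => r p.1 p.2) 𝔴.1)

/-- Kleisli convolution `β ∘ α = β · T_ξ α · m_X°` of `𝒯`-relations
`α : X ⇸ Y` and `β : Y ⇸ Z`. -/
def kleisli (𝒯 : TopTheory V T) {X Y Z : Type u}
    (β : T Y → Z → V) (α : T X → Y → V) (𝔵 : T X) (z : Z) : V :=
  ⨆ 𝔛 : {𝔛 : T (T X) // 𝒯.m 𝔛 = 𝔵}, ⨆ 𝔶 : T Y, 𝒯.tens (𝒯.Txi α 𝔛.1 𝔶) (β 𝔶 z)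

/-- The `𝒯`-relation `e_X° : X ⇸ X`. -/
def unitRel (𝒯 : TopTheory V T) (X : Type u) (𝔵 : T X) (x : X) : V :=
  ⨆ _ : 𝔵 = 𝒯.e x, 𝒯.unit

/-- A `𝒯`-category structure on `X`: a `𝒯`-relation `a : X ⇸ X` with
`e_X° ≤ a` and `a ∘ a ≤ a`. -/
structure TCatStr (𝒯 : TopTheory V T) (X : Type u) where
  rel : T X → X → V
  le_refl : ∀ x : X, 𝒯.unit ≤ rel (𝒯.e x) x
  comp : ∀ (𝔵 : T X) (x : X), 𝒯.kleisli rel rel 𝔵 x ≤ rel 𝔵 x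

/-- The `𝒯`-module conditions `φ ∘ a ≤ φ` and `b ∘ φ ≤ φ` for a `𝒯`-relation
`φ : X ⇸ Y` between (structures underlying) `𝒯`-categories `(X,a)` and `(Y,b)`. -/
def IsTModRel (𝒯 : TopTheory V T) {X Y : Type u}
    (a : T X → X → V) (b : T Y → Y → V) (φ : T X → Y → V) : Prop :=
  (∀ 𝔵 y, 𝒯.kleisli φ a 𝔵 y ≤ φ 𝔵 y) ∧ (∀ 𝔵 y, 𝒯.kleisli b φ 𝔵 y ≤ φ 𝔵 y)

variable {𝒯 : TopTheory V T}

/-- `f_* = b · T f`. -/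
def modStar {X Y : Type u} (b : 𝒯.TCatStr Y) (f : X → Y) (𝔵 : T X) (y : Y) : V :=
  b.rel (𝒯.map f 𝔵) y

/-- `f^* = f° · b`. -/
def modCostar {X Y : Type u} (b : 𝒯.TCatStr Y) (f : X → Y) (𝔶 : T Y) (x : X) : V :=
  b.rel 𝔶 (f x)

/-- The extension `φ ⟜ ψ` of `φ : X ⇸∘ Y` along `ψ : X ⇸∘ Z`, given by
`(φ ⟜ ψ)(𝔷,y) = ⋀_{𝔵 ∈ T X} hom((T_ξ ψ · m_X°)(𝔵,𝔷), φ(𝔵,y))`. -/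
def extend (𝒯 : TopTheory V T) {X Y Z : Type u}
    (φ : T X → Y → V) (ψ : T X → Z → V) (𝔷 : T Z) (y : Y) : V :=
  ⨅ 𝔵 : T X, 𝒯.ihom (⨆ 𝔛 : {𝔛 : T (T X) // 𝒯.m 𝔛 = 𝔵}, 𝒯.Txi ψ 𝔛.1 𝔷) (φ 𝔵 y)

/-- A `𝒯`-functor `f : (X,a) → (Y,b)`. -/
def IsTFunctor {X Y : Type u} (a : 𝒯.TCatStr X) (b : 𝒯.TCatStr Y) (f : X → Y) : Prop :=
  ∀ (𝔵 : T X) (x : X), a.rel 𝔵 x ≤ b.rel (𝒯.map f 𝔵) (f x)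

/-- A fully faithful `𝒯`-functor. -/
def FullyFaithful {X Y : Type u} (a : 𝒯.TCatStr X) (b : 𝒯.TCatStr Y) (f : X → Y) : Prop :=
  ∀ (𝔵 : T X) (x : X), a.rel 𝔵 x = b.rel (𝒯.map f 𝔵) (f x)

/-- The order `f ≤ g ⟺ f^* ≤ g^*` on `𝒯`-functors `X → (Y,b)`. -/
def funLE {X Y : Type u} (b : 𝒯.TCatStr Y) (f g : X → Y) : Prop :=
  ∀ (𝔶 : T Y) (x : X), b.rel 𝔶 (f x) ≤ b.rel 𝔶 (g x)

/-- Equivalence `f ≅ g ⟺ f^* = g^*` of `𝒯`-functors `X → (Y,b)`. -/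
def FunEquiv {X Y : Type u} (b : 𝒯.TCatStr Y) (f g : X → Y) : Prop :=
  ∀ (𝔶 : T Y) (x : X), b.rel 𝔶 (f x) = b.rel 𝔶 (g x)

/-- `f ⊣ g`:  `1_X ≤ g·f` and `f·g ≤ 1_Y`. -/
def IsAdjunction {X Y : Type u} (a : 𝒯.TCatStr X) (b : 𝒯.TCatStr Y)
    (f : X → Y) (g : Y → X) : Prop :=
  (∀ (𝔵 : T X) (x : X), a.rel 𝔵 x ≤ a.rel 𝔵 (g (f x))) ∧
    (∀ (𝔶 : T Y) (y : Y), b.rel 𝔶 (f (g y)) ≤ b.rel 𝔶 y)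

/-- A left adjoint `𝒯`-functor. -/
def IsLeftAdjoint {X Y : Type u} (a : 𝒯.TCatStr X) (b : 𝒯.TCatStr Y) (f : X → Y) : Prop :=
  IsTFunctor a b f ∧ ∃ g : Y → X, IsTFunctor b a g ∧ IsAdjunction a b f g

/-- L-separatedness: equivalent `𝒯`-functors into `X` are equal. -/
def Separated {X : Type u} (a : 𝒯.TCatStr X) : Prop :=
  ∀ (A : Type u) (as : 𝒯.TCatStr A) (f g : A → X),
    IsTFunctor as a f → IsTFunctor as a g → FunEquiv a f g → f = g

/-- Injectivity with respect to fully faithful `𝒯`-functors. -/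
def Injective {X : Type u} (a : 𝒯.TCatStr X) : Prop :=
  ∀ (A B : Type u) (as : 𝒯.TCatStr A) (bs : 𝒯.TCatStr B) (f : A → X) (i : A → B),
    IsTFunctor as a f → IsTFunctor as bs i → FullyFaithful as bs i →
      ∃ g : B → X, IsTFunctor bs a g ∧ FunEquiv a (g ∘ i) f

/-- `g : Z → X` is the `ψ`-weighted colimit of `h : A → X`, i.e. `g_* = h_* ⟜ ψ`. -/
def IsColimit {X A Z : Type u} (a : 𝒯.TCatStr X) (h : A → X) (ψ : T A → Z → V)
    (g : Z → X) : Prop :=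
  ∀ (𝔷 : T Z) (x : X), modStar a g 𝔷 x = 𝒯.extend (modStar a h) ψ 𝔷 x

/-- Cocompleteness: every weighted diagram has a colimit. -/
def Cocomplete {X : Type u} (a : 𝒯.TCatStr X) : Prop :=
  ∀ (A Z : Type u) (as : 𝒯.TCatStr A) (cs : 𝒯.TCatStr Z) (h : A → X),
    IsTFunctor as a h → ∀ ψ : T A → Z → V, 𝒯.IsTModRel as.rel cs.rel ψ →
      ∃ g : Z → X, IsTFunctor cs a g ∧ IsColimit a h ψ g

/-- Cocontinuity: preservation of all weighted colimits. -/
def Cocontinuous {X Y : Type u} (a : 𝒯.TCatStr X) (b : 𝒯.TCatStr Y) (f : X → Y) : Prop :=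
  ∀ (A Z : Type u) (as : 𝒯.TCatStr A) (cs : 𝒯.TCatStr Z) (h : A → X)
    (ψ : T A → Z → V) (g : Z → X),
    IsTFunctor as a h → 𝒯.IsTModRel as.rel cs.rel ψ → IsTFunctor cs a g →
      IsColimit a h ψ g → IsColimit b (f ∘ h) ψ (f ∘ g)

/-- A presheaf on `(X,a)`: a `𝒯`-module `X ⇸∘ G`, where `G = (1, e_1°)`. -/
def IsPresheaf {X : Type u} (a : 𝒯.TCatStr X) (ψ : T X → V) : Prop :=
  𝒯.IsTModRel a.rel (𝒯.unitRel PUnit) (fun 𝔵 _ => ψ 𝔵)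

/-- The underlying set of the presheaf `𝒯`-category `X̂`. -/
def Hat {X : Type u} (a : 𝒯.TCatStr X) : Type u := {ψ : T X → V // IsPresheaf a ψ}

/-- The `𝒯`-category structure `⟦-,-⟧` of `V^{|X|}`. -/
def powRel (𝒯 : TopTheory V T) (X : Type u) (𝔭 : T (T X → V)) (ψ : T X → V) : V :=
  ⨅ 𝔮 : {q : T ((T X) × (T X → V)) // 𝒯.map Prod.snd q = 𝔭},
    𝒯.ihom (𝒯.xi (𝒯.map (fun p => p.2 p.1) 𝔮.1)) (ψ (𝒯.m (𝒯.map Prod.fst 𝔮.1)))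

/-- `hs` is the `𝒯`-category structure on `X̂` inherited from `V^{|X|}`. -/
def IsHatStr {X : Type u} (a : 𝒯.TCatStr X) (hs : 𝒯.TCatStr (Hat a)) : Prop :=
  ∀ (𝔭 : T (Hat a)) (ψ : Hat a), hs.rel 𝔭 ψ = 𝒯.powRel X (𝒯.map Subtype.val 𝔭) ψ.1

/-- `y` is the Yoneda functor `X → X̂`, `y x = a(-,x)`. -/
def IsYoneda {X : Type u} (a : 𝒯.TCatStr X) (y : X → Hat a) : Prop :=
  ∀ (x : X) (𝔵 : T X), (y x).1 𝔵 = a.rel 𝔵 x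

/-- The underlying map `ψ ↦ ψ ∘ f^*` of `f̂ : X̂ → Ŷ`. -/
def hatMapRel {X Y : Type u} (b : 𝒯.TCatStr Y) (f : X → Y) (ψ : T X → V) (𝔶 : T Y) : V :=
  𝒯.kleisli (fun 𝔵 (_ : PUnit.{u + 1}) => ψ 𝔵) (modCostar b f) 𝔶 PUnit.unit

/-- `fh` is the `𝒯`-functor `f̂ : X̂ → Ŷ`, with underlying map `ψ ↦ ψ ∘ f^*`. -/
def IsHatMap {X Y : Type u} (a : 𝒯.TCatStr X) (b : 𝒯.TCatStr Y) (f : X → Y)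
    (fh : Hat a → Hat b) : Prop :=
  ∀ (ψ : Hat a) (𝔶 : T Y), (fh ψ).1 𝔶 = hatMapRel b f ψ.1 𝔶

/-- An inhabited `𝒯`-module: `k ≤ ⋀_y ⋁_𝔵 φ(𝔵,y)`. -/
def InhabitedMod (𝒯 : TopTheory V T) {X Y : Type u} (φ : T X → Y → V) : Prop :=
  𝒯.unit ≤ ⨅ y : Y, ⨆ 𝔵 : T X, φ 𝔵 y

/-- A dense `𝒯`-functor: `f_*` is inhabited. -/
def Dense {X Y : Type u} (b : 𝒯.TCatStr Y) (f : X → Y) : Prop :=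
  𝒯.InhabitedMod (modStar b f)

/-- The underlying set of `X⁺ = {ψ ∈ X̂ ∣ ψ inhabited}`. -/
def Plus {X : Type u} (a : 𝒯.TCatStr X) : Type u :=
  {ψ : Hat a // 𝒯.InhabitedMod (fun 𝔵 (_ : PUnit.{u + 1}) => ψ.1 𝔵)}

/-- `ps` is the `𝒯`-category structure on `X⁺` inherited from `X̂`. -/
def IsPlusStr {X : Type u} (a : 𝒯.TCatStr X) (hs : 𝒯.TCatStr (Hat a))
    (ps : 𝒯.TCatStr (Plus a)) : Prop :=
  ∀ (𝔭 : T (Plus a)) (ψ : Plus a), ps.rel 𝔭 ψ = hs.rel (𝒯.map Subtype.val 𝔭) ψ.1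

/-- Inhabited-cocompleteness: all colimits with inhabited weights exist. -/
def ICocomplete {X : Type u} (a : 𝒯.TCatStr X) : Prop :=
  ∀ (A Z : Type u) (as : 𝒯.TCatStr A) (cs : 𝒯.TCatStr Z) (h : A → X),
    IsTFunctor as a h → ∀ ψ : T A → Z → V, 𝒯.IsTModRel as.rel cs.rel ψ →
      𝒯.InhabitedMod ψ → ∃ g : Z → X, IsTFunctor cs a g ∧ IsColimit a h ψ g

/-- Inhabited-cocontinuity: preservation of all colimits with inhabited weights. -/
def ICocontinuous {X Y : Type u} (a : 𝒯.TCatStr X) (b : 𝒯.TCatStr Y) (f : X → Y) : Prop :=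
  ∀ (A Z : Type u) (as : 𝒯.TCatStr A) (cs : 𝒯.TCatStr Z) (h : A → X)
    (ψ : T A → Z → V) (g : Z → X),
    IsTFunctor as a h → 𝒯.IsTModRel as.rel cs.rel ψ → 𝒯.InhabitedMod ψ →
      IsTFunctor cs a g → IsColimit a h ψ g → IsColimit b (f ∘ h) ψ (f ∘ g)


section YonedaAux

variable (𝒯 : TopTheory V T)

lemma tens_mono_right {u z z' : V} (h : z ≤ z') : 𝒯.tens u z ≤ 𝒯.tens u z' := by
  have hsup : sSup {z, z'} = z' := by
    apply le_antisymm (sSup_le ?_) (le_sSup (by simp))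
    rintro w (rfl | rfl) <;> simp [h]
  have := 𝒯.tens_sSup u {z, z'}
  rw [hsup] at this
  rw [this]
  exact le_trans (le_iSup₂ (f := fun v (_ : v ∈ ({z, z'} : Set V)) => 𝒯.tens u v) z
    (by simp)) le_rfl

lemma tens_mono_left {u u' z : V} (h : u ≤ u') : 𝒯.tens u z ≤ 𝒯.tens u' z := by
  rw [𝒯.tens_comm u z, 𝒯.tens_comm u' z]; exact 𝒯.tens_mono_right h

lemma le_ihom {u z w : V} (h : 𝒯.tens u z ≤ w) : z ≤ 𝒯.ihom u w := le_sSup h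

lemma ihom_anti {u u' w : V} (h : u ≤ u') : 𝒯.ihom u' w ≤ 𝒯.ihom u w := by
  apply sSup_le_sSup
  intro z hz
  exact le_trans (𝒯.tens_mono_left h) hz

lemma ihom_unit (w : V) : 𝒯.ihom 𝒯.unit w = w := by
  unfold ihom
  simp only [𝒯.unit_tens]
  exact le_antisymm (sSup_le fun z hz => hz) (le_sSup le_rfl)

end YonedaAux

/-- Corollary 1.7, Yoneda lemma. For every `𝒯`-category `(X,a)`,
every `ψ ∈ X̂` and every `𝔵 ∈ T X` one has `ψ(𝔵) = ⟦T y_X(𝔵), ψ⟧`, i.e. `(y_X)_*` is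
given by evaluation; consequently the Yoneda functor `y_X : X → X̂` is fully faithful. -/
theorem statement1 (𝒯 : TopTheory V T) {X : Type u} (a : 𝒯.TCatStr X)
    (hs : 𝒯.TCatStr (Hat a)) (hhs : IsHatStr a hs)
    (y : X → Hat a) (hy : IsYoneda a y) :
    (∀ (ψ : Hat a) (𝔵 : T X), ψ.1 𝔵 = hs.rel (𝒯.map y 𝔵) ψ) ∧
      FullyFaithful a hs y := by
  have main : ∀ (ψ : Hat a) (𝔵 : T X), ψ.1 𝔵 = hs.rel (𝒯.map y 𝔵) ψ := by
    intro ψ 𝔵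
    rw [hhs]
    have hval : 𝒯.map Subtype.val (𝒯.map y 𝔵) = 𝒯.map (fun x => (y x).1) 𝔵 := by
      exact (𝒯.map_comp _ _ 𝔵).symm
    refine (congrArg (fun p => ψ.1 𝔵 = 𝒯.powRel X p ψ.1) hval).mpr ?_
    apply le_antisymm
    · -- ψ 𝔵 ≤ ⨅ ...
      apply le_iInf
      rintro ⟨q, hq⟩
      apply 𝒯.le_ihom
      -- use (BC) on the pullback of snd along x ↦ (y x).1
      obtain ⟨𝔴, h1, h2⟩ := 𝒯.map_bc Prod.snd (fun x => (y x).1) q 𝔵 hq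
      -- 𝔴 : T {p : (T X × (T X → V)) × X // p.1.2 = (y p.2).1}
      set 𝔴' : T (T X × X) := 𝒯.map (fun w => (w.1.1.1, w.1.2)) 𝔴 with h𝔴'
      have hfst : 𝒯.map Prod.fst 𝔴' = 𝒯.map Prod.fst q := by
        rw [h𝔴', ← 𝒯.map_comp, ← h1, ← 𝒯.map_comp]; rfl
      have hsnd : 𝒯.map Prod.snd 𝔴' = 𝔵 := by
        rw [h𝔴', ← 𝒯.map_comp, ← h2]; rfl
      have hev : 𝒯.map (fun p : T X × (T X → V) => p.2 p.1) q
          = 𝒯.map (fun p : T X × X => a.rel p.1 p.2) 𝔴' := by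
        rw [h𝔴', ← 𝒯.map_comp, ← h1, ← 𝒯.map_comp]
        congr 1
        funext w
        show w.1.1.2 w.1.1.1 = a.rel w.1.1.1 w.1.2
        rw [w.2, hy]
      have hTxi : 𝒯.xi (𝒯.map (fun p : T X × (T X → V) => p.2 p.1) q)
          ≤ 𝒯.Txi a.rel (𝒯.map Prod.fst q) 𝔵 := by
        rw [hev]
        exact le_iSup (fun (w : {w : T (T X × X) // 𝒯.map Prod.fst w = 𝒯.map Prod.fst q
          ∧ 𝒯.map Prod.snd w = 𝔵}) => 𝒯.xi (𝒯.map (fun p => a.rel p.1 p.2) w.1))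
          ⟨𝔴', hfst, hsnd⟩
      refine le_trans (𝒯.tens_mono_left hTxi) ?_
      -- now use the module condition ψ ∘ a ≤ ψ
      have hmod := ψ.2.1 (𝒯.m (𝒯.map Prod.fst q)) PUnit.unit
      refine le_trans ?_ hmod
      unfold kleisli
      refine le_trans ?_ (le_iSup _ (⟨𝒯.map Prod.fst q, rfl⟩ :
        {𝔛 : T (T X) // 𝒯.m 𝔛 = 𝒯.m (𝒯.map Prod.fst q)}))
      exact le_iSup (fun 𝔶 => 𝒯.tens (𝒯.Txi a.rel (𝒯.map Prod.fst q) 𝔶) (ψ.1 𝔶)) 𝔵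
    · -- ⨅ ... ≤ ψ 𝔵 : pick q₀ = T⟨e, y⟩ 𝔵
      have hq₀ : 𝒯.map Prod.snd (𝒯.map (fun x => (𝒯.e x, (y x).1)) 𝔵)
          = 𝒯.map (fun x => (y x).1) 𝔵 := by
        rw [← 𝒯.map_comp]; rfl
      refine le_trans (iInf_le _ ⟨𝒯.map (fun x => (𝒯.e x, (y x).1)) 𝔵, hq₀⟩) ?_
      have hmfst : 𝒯.m (𝒯.map Prod.fst (𝒯.map (fun x => (𝒯.e x, (y x).1)) 𝔵)) = 𝔵 := by
        rw [← 𝒯.map_comp]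
        exact 𝒯.m_map_e 𝔵
      rw [hmfst]
      have hunit : 𝒯.unit ≤ 𝒯.xi (𝒯.map (fun p : T X × (T X → V) => p.2 p.1)
          (𝒯.map (fun x => (𝒯.e x, (y x).1)) 𝔵)) := by
        rw [← 𝒯.map_comp]
        have : 𝒯.unit = 𝒯.xi (𝒯.map (fun _ : X => 𝒯.unit) 𝔵) := (𝒯.xi_unit 𝔵).symm
        rw [this]
        apply 𝒯.xi_mono
        intro x
        show 𝒯.unit ≤ (y x).1 (𝒯.e x)
        rw [hy]
        exact a.le_refl x
      refine le_trans (𝒯.ihom_anti hunit) ?_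
      rw [𝒯.ihom_unit]
  refine ⟨main, ?_⟩
  intro 𝔵 x
  rw [← main (y x) 𝔵, hy]

end TopTheory

end Paper
end

section
/- For every 𝒯-category X, the presheaf 𝒯-category X̂ is cocomplete; more precisely, the 𝒯-functor y_X^{-1}: (X̂)^ → X̂ (restriction along the Yoneda functor, ψ ↦ ψ∘(y_X)_*) satisfies y_X^{-1} · y_{X̂} = 1_{X̂} and is left adjoint to y_{X̂}. -/
universe u

namespace Paper

namespace TopTheory

variable {V : Type u} [CompleteLattice V] {T : Type u → Type u}

variable {𝒯 : TopTheory V T}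

/-! ### Auxiliary lemmas -/

section Aux

variable (𝒯 : TopTheory V T)

/-- `⊗` distributes over suprema in the second variable. -/
lemma tens_iSup' (u : V) {ι : Sort*} (f : ι → V) :
    𝒯.tens u (⨆ i, f i) = ⨆ i, 𝒯.tens u (f i) := by
  rw [iSup, 𝒯.tens_sSup]
  apply le_antisymm
  · refine iSup₂_le fun v hv => ?_
    obtain ⟨i, rfl⟩ := hv
    exact le_iSup (fun i => 𝒯.tens u (f i)) i
  · exact iSup_le fun i => le_iSup₂_of_le (f i) ⟨i, rfl⟩ le_rfl

lemma tens_iSup_left {ι : Sort*} (f : ι → V) (v : V) :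
    𝒯.tens (⨆ i, f i) v = ⨆ i, 𝒯.tens (f i) v := by
  rw [𝒯.tens_comm, tens_iSup' 𝒯]
  exact iSup_congr fun i => 𝒯.tens_comm v (f i)

lemma tens_bot (u : V) : 𝒯.tens u ⊥ = ⊥ := by
  have h := 𝒯.tens_sSup u ∅
  simpa using h

lemma tens_le_tens_right {v v' : V} (u : V) (h : v ≤ v') :
    𝒯.tens u v ≤ 𝒯.tens u v' := by
  have h1 : v' = sSup {v, v'} := by rw [sSup_pair, sup_eq_right.mpr h]
  rw [h1, 𝒯.tens_sSup]
  exact le_iSup₂_of_le v (Set.mem_insert _ _) le_rfl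

lemma tens_le_tens {u u' v v' : V} (hu : u ≤ u') (hv : v ≤ v') :
    𝒯.tens u v ≤ 𝒯.tens u' v' := by
  refine le_trans (𝒯.tens_le_tens_right u hv) ?_
  rw [𝒯.tens_comm u v', 𝒯.tens_comm u' v']
  exact 𝒯.tens_le_tens_right v' hu

lemma tens_unit_right (v : V) : 𝒯.tens v 𝒯.unit = v := by
  rw [𝒯.tens_comm, 𝒯.unit_tens]

lemma tens_ihom_le (u w : V) : 𝒯.tens u (𝒯.ihom u w) ≤ w := by
  rw [ihom, 𝒯.tens_sSup]
  exact iSup₂_le fun z hz => hz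

lemma le_ihom_iff {u z w : V} : z ≤ 𝒯.ihom u w ↔ 𝒯.tens u z ≤ w :=
  ⟨fun h => le_trans (𝒯.tens_le_tens_right u h) (𝒯.tens_ihom_le u w),
   fun h => le_sSup h⟩

lemma ihom_le_ihom_right {w w' : V} (u : V) (h : w ≤ w') :
    𝒯.ihom u w ≤ 𝒯.ihom u w' :=
  (𝒯.le_ihom_iff).mpr (le_trans (𝒯.tens_ihom_le u w) h)

lemma ihom_le_ihom_left {u u' : V} (h : u' ≤ u) (w : V) :
    𝒯.ihom u w ≤ 𝒯.ihom u' w :=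
  (𝒯.le_ihom_iff).mpr (le_trans (𝒯.tens_le_tens h le_rfl) (𝒯.tens_ihom_le u w))

lemma ihom_iSup {ι : Sort*} (f : ι → V) (w : V) :
    𝒯.ihom (⨆ i, f i) w = ⨅ i, 𝒯.ihom (f i) w := by
  apply le_antisymm
  · exact le_iInf fun i => 𝒯.ihom_le_ihom_left (le_iSup f i) w
  · refine (𝒯.le_ihom_iff).mpr ?_
    rw [𝒯.tens_iSup_left]
    exact iSup_le fun i =>
      le_trans (𝒯.tens_le_tens_right (f i) (iInf_le _ i)) (𝒯.tens_ihom_le (f i) w)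

lemma map_map {X Y Z : Type u} (g : Y → Z) (f : X → Y) (𝔵 : T X) :
    𝒯.map g (𝒯.map f 𝔵) = 𝒯.map (fun x => g (f x)) 𝔵 :=
  (𝒯.map_comp g f 𝔵).symm

end Aux

section Txi

variable (𝒯 : TopTheory V T)

lemma le_Txi {X Y : Type u} (r : X → Y → V) {𝔵 : T X} {𝔶 : T Y}
    (𝔴 : T (X × Y)) (h1 : 𝒯.map Prod.fst 𝔴 = 𝔵) (h2 : 𝒯.map Prod.snd 𝔴 = 𝔶) :
    𝒯.xi (𝒯.map (fun p => r p.1 p.2) 𝔴) ≤ 𝒯.Txi r 𝔵 𝔶 :=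
  le_iSup (fun 𝔴 : {w : T (X × Y) // 𝒯.map Prod.fst w = 𝔵 ∧ 𝒯.map Prod.snd w = 𝔶} =>
    𝒯.xi (𝒯.map (fun p => r p.1 p.2) 𝔴.1)) ⟨𝔴, h1, h2⟩

lemma Txi_le {X Y : Type u} (r : X → Y → V) {𝔵 : T X} {𝔶 : T Y} {c : V}
    (h : ∀ 𝔴 : T (X × Y), 𝒯.map Prod.fst 𝔴 = 𝔵 → 𝒯.map Prod.snd 𝔴 = 𝔶 →
      𝒯.xi (𝒯.map (fun p => r p.1 p.2) 𝔴) ≤ c) :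
    𝒯.Txi r 𝔵 𝔶 ≤ c :=
  iSup_le fun 𝔴 => h 𝔴.1 𝔴.2.1 𝔴.2.2

lemma Txi_mono {X Y : Type u} {r r' : X → Y → V} (h : ∀ x y, r x y ≤ r' x y)
    (𝔵 : T X) (𝔶 : T Y) : 𝒯.Txi r 𝔵 𝔶 ≤ 𝒯.Txi r' 𝔵 𝔶 := by
  refine 𝒯.Txi_le r fun 𝔴 h1 h2 => ?_
  exact le_trans (𝒯.xi_mono _ _ (fun p => h p.1 p.2) 𝔴) (𝒯.le_Txi r' 𝔴 h1 h2)

/-- Collapse of a doubled `ξ` along `m`. -/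
lemma xi_collapse {E C : Type u} (π : E → T C) (f : C → V) (𝔘 : T E) :
    𝒯.xi (𝒯.map (fun e => 𝒯.xi (𝒯.map f (π e))) 𝔘) =
      𝒯.xi (𝒯.map f (𝒯.m (𝒯.map π 𝔘))) := by
  have h1 : 𝒯.map (fun e => 𝒯.xi (𝒯.map f (π e))) 𝔘
      = 𝒯.map 𝒯.xi (𝒯.map (𝒯.map f) (𝒯.map π 𝔘)) := by
    rw [𝒯.map_map, 𝒯.map_map]
  rw [h1, ← 𝒯.xi_m, ← 𝒯.m_nat]

lemma xi_map_tens {E : Type u} (uf vf : E → V) (𝔘 : T E) :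
    𝒯.xi (𝒯.map (fun q => 𝒯.tens (uf q) (vf q)) 𝔘) =
      𝒯.tens (𝒯.xi (𝒯.map uf 𝔘)) (𝒯.xi (𝒯.map vf 𝔘)) := by
  have h := 𝒯.xi_tens (𝒯.map (fun q => (uf q, vf q)) 𝔘)
  rw [𝒯.map_map, 𝒯.map_map, 𝒯.map_map] at h
  exact h

/-- `T_ξ` is oplax with respect to `m`. -/
lemma Txi_Txi_le {X Y : Type u} (r : X → Y → V) (𝔛 : T (T X)) (𝔜 : T (T Y)) :
    𝒯.Txi (𝒯.Txi r) 𝔛 𝔜 ≤ 𝒯.Txi r (𝒯.m 𝔛) (𝒯.m 𝔜) := by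
  refine 𝒯.Txi_le _ fun 𝔳 h1 h2 => ?_
  have hfun : (fun q : T X × T Y => 𝒯.Txi r q.1 q.2)
      = fun q => ⨆ w : {w : T (X × Y) // (𝒯.map Prod.fst w, 𝒯.map Prod.snd w) = q},
          𝒯.xi (𝒯.map (fun p => r p.1 p.2) w.1) := by
    funext q
    apply le_antisymm
    · exact iSup_le fun w => le_iSup_of_le ⟨w.1, by rw [w.2.1, w.2.2]⟩ le_rfl
    · exact iSup_le fun w =>
        le_iSup_of_le ⟨w.1, congrArg Prod.fst w.2, congrArg Prod.snd w.2⟩ le_rfl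
  rw [hfun]
  refine le_trans (le_of_eq (𝒯.xi_nat
    (fun w : T (X × Y) => (𝒯.map Prod.fst w, 𝒯.map Prod.snd w))
    (fun w => 𝒯.xi (𝒯.map (fun p => r p.1 p.2) w)) 𝔳).symm) ?_
  refine iSup_le fun 𝔙' => ?_
  obtain ⟨𝔙, h𝔙⟩ := 𝔙'
  refine le_trans (le_of_eq (𝒯.xi_collapse id (fun p => r p.1 p.2) 𝔙)) ?_
  have hid : 𝒯.map (id : T (X × Y) → T (X × Y)) 𝔙 = 𝔙 := by rw [𝒯.map_id]; rfl
  rw [hid]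
  refine 𝒯.le_Txi r (𝒯.m 𝔙) ?_ ?_
  · rw [𝒯.m_nat]
    have h3 : 𝒯.map (𝒯.map Prod.fst) 𝔙 = 𝒯.map Prod.fst 𝔳 := by
      rw [← h𝔙, 𝒯.map_map]
    rw [h3, h1]
  · rw [𝒯.m_nat]
    have h3 : 𝒯.map (𝒯.map Prod.snd) 𝔙 = 𝒯.map Prod.snd 𝔳 := by
      rw [← h𝔙, 𝒯.map_map]
    rw [h3, h2]

/-- Transfer a witness along a (BC) square. -/
lemma bc_transfer {X' B C : Type u} (f : B → C) (𝔳 : T (T X' × C)) (𝔟 : T B)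
    (hv : 𝒯.map Prod.snd 𝔳 = 𝒯.map f 𝔟) :
    ∃ 𝔴 : T (T X' × B), 𝒯.map Prod.fst 𝔴 = 𝒯.map Prod.fst 𝔳 ∧
      𝒯.map Prod.snd 𝔴 = 𝔟 ∧
      ∀ val : C → T X' → V,
        𝒯.map (fun p => val p.2 p.1) 𝔳 = 𝒯.map (fun p : T X' × B => val (f p.2) p.1) 𝔴 := by
  obtain ⟨𝔴₀, h1, h2⟩ := 𝒯.map_bc Prod.snd f 𝔳 𝔟 hv
  refine ⟨𝒯.map (fun q => (q.1.1.1, q.1.2)) 𝔴₀, ?_, ?_, ?_⟩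
  · rw [𝒯.map_map, ← h1, 𝒯.map_map]
  · rw [𝒯.map_map, ← h2]
  · intro val
    rw [𝒯.map_map, ← h1, 𝒯.map_map]
    congr 1
    funext q
    simp only
    rw [q.2]

lemma xi_ev_le_Txi {X' B C : Type u} (f : B → C) (val : C → T X' → V)
    (𝔳 : T (T X' × C)) (𝔟 : T B) (hv : 𝒯.map Prod.snd 𝔳 = 𝒯.map f 𝔟) :
    𝒯.xi (𝒯.map (fun p => val p.2 p.1) 𝔳) ≤
      𝒯.Txi (fun 𝔵 b => val (f b) 𝔵) (𝒯.map Prod.fst 𝔳) 𝔟 := by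
  obtain ⟨𝔴, h1, h2, h3⟩ := 𝒯.bc_transfer f 𝔳 𝔟 hv
  rw [h3 val]
  exact 𝒯.le_Txi (fun 𝔵 b => val (f b) 𝔵) 𝔴 h1 h2

end Txi

section Hom

variable (𝒯 : TopTheory V T)

/-- `X̂(𝔭, φ)` expressed as an infimum over witnesses in `T (T X × X̂)`. -/
lemma hom_formula {X : Type u} (a : 𝒯.TCatStr X) (hs : 𝒯.TCatStr (Hat a))
    (hhs : IsHatStr a hs) (𝔭 : T (Hat a)) (φ : Hat a) :
    hs.rel 𝔭 φ = ⨅ 𝔳 : {𝔳 : T (T X × Hat a) // 𝒯.map Prod.snd 𝔳 = 𝔭},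
      𝒯.ihom (𝒯.xi (𝒯.map (fun p => p.2.1 p.1) 𝔳.1)) (φ.1 (𝒯.m (𝒯.map Prod.fst 𝔳.1))) := by
  rw [hhs 𝔭 φ, powRel]
  apply le_antisymm
  · refine le_iInf fun 𝔳' => ?_
    obtain ⟨𝔳, h𝔳⟩ := 𝔳'
    refine iInf_le_of_le ⟨𝒯.map (fun p => (p.1, p.2.1)) 𝔳, ?_⟩ (le_of_eq ?_)
    · rw [𝒯.map_map, ← h𝔳]
      exact 𝒯.map_comp Subtype.val Prod.snd 𝔳
    · rw [𝒯.map_map, 𝒯.map_map]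
  · refine le_iInf fun 𝔮' => ?_
    obtain ⟨𝔮, h𝔮⟩ := 𝔮'
    obtain ⟨𝔴, h1, h2⟩ := 𝒯.map_bc Prod.snd (Subtype.val : Hat a → (T X → V)) 𝔮 𝔭 h𝔮
    refine iInf_le_of_le ⟨𝒯.map (fun q => (q.1.1.1, q.1.2)) 𝔴, ?_⟩ (le_of_eq ?_)
    · rw [𝒯.map_map, ← h2]
      rfl
    · have hev : 𝒯.map (fun p : T X × Hat a => p.2.1 p.1)
          (𝒯.map (fun q => (q.1.1.1, q.1.2)) 𝔴) = 𝒯.map (fun p => p.2 p.1) 𝔮 := by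
        rw [𝒯.map_map, ← h1, 𝒯.map_map]
        congr 1
        funext q
        simp only
        rw [← q.2]
      have hfst : 𝒯.map Prod.fst (𝒯.map (fun q => (q.1.1.1, q.1.2)) 𝔴)
          = 𝒯.map Prod.fst 𝔮 := by
        rw [𝒯.map_map, ← h1, 𝒯.map_map]
      rw [hev]
      exact congrArg (fun t => 𝒯.ihom (𝒯.xi (𝒯.map (fun p : T X × (T X → V) => p.2 p.1) 𝔮)) (φ.1 (𝒯.m t))) hfst

/-- The Yoneda lemma: `X̂(T y 𝔵, φ) = φ 𝔵`. -/
lemma yoneda_eval {X : Type u} (a : 𝒯.TCatStr X) (hs : 𝒯.TCatStr (Hat a))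
    (hhs : IsHatStr a hs) (y : X → Hat a) (hy : IsYoneda a y)
    (𝔵 : T X) (φ : Hat a) : hs.rel (𝒯.map y 𝔵) φ = φ.1 𝔵 := by
  rw [𝒯.hom_formula a hs hhs]
  apply le_antisymm
  · refine iInf_le_of_le ⟨𝒯.map (fun x => (𝒯.e x, y x)) 𝔵, by rw [𝒯.map_map]⟩ ?_
    have hev : 𝒯.map (fun p : T X × Hat a => p.2.1 p.1)
        (𝒯.map (fun x => (𝒯.e x, y x)) 𝔵) = 𝒯.map (fun x => (y x).1 (𝒯.e x)) 𝔵 := by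
      rw [𝒯.map_map]
    have hfst : 𝒯.m (𝒯.map Prod.fst (𝒯.map (fun x => (𝒯.e x, y x)) 𝔵)) = 𝔵 := by
      rw [𝒯.map_map]
      exact 𝒯.m_map_e 𝔵
    rw [hev, hfst]
    refine le_trans (𝒯.ihom_le_ihom_left ?_ (φ.1 𝔵)) (le_of_eq (𝒯.ihom_unit _))
    have h1 : 𝒯.unit = 𝒯.xi (𝒯.map (fun _ : X => 𝒯.unit) 𝔵) := (𝒯.xi_unit 𝔵).symm
    rw [h1]
    refine 𝒯.xi_mono _ _ (fun x => ?_) 𝔵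
    rw [hy x]
    exact a.le_refl x
  · refine le_iInf fun 𝔳 => ?_
    refine (𝒯.le_ihom_iff).mpr ?_
    have hTxi : 𝒯.xi (𝒯.map (fun p : T X × Hat a => p.2.1 p.1) 𝔳.1)
        ≤ 𝒯.Txi a.rel (𝒯.map Prod.fst 𝔳.1) 𝔵 := by
      have h := 𝒯.xi_ev_le_Txi y (fun c 𝔶 => c.1 𝔶) 𝔳.1 𝔵 𝔳.2
      have heq : (fun (𝔶 : T X) (x : X) => (y x).1 𝔶) = a.rel := by
        funext 𝔶 x; exact hy x 𝔶
      rwa [heq] at h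
    refine le_trans (𝒯.tens_le_tens hTxi le_rfl) ?_
    have hmod := φ.2.1 (𝒯.m (𝒯.map Prod.fst 𝔳.1)) PUnit.unit
    refine le_trans ?_ hmod
    exact le_iSup_of_le ⟨𝒯.map Prod.fst 𝔳.1, rfl⟩ (le_iSup_of_le 𝔵 le_rfl)

end Hom

section Mod

variable (𝒯 : TopTheory V T)

lemma le_kleisli {X Y Z : Type u} (β : T Y → Z → V) (α : T X → Y → V)
    {𝔵 : T X} {z : Z} (𝔛 : T (T X)) (h : 𝒯.m 𝔛 = 𝔵) (𝔶 : T Y) :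
    𝒯.tens (𝒯.Txi α 𝔛 𝔶) (β 𝔶 z) ≤ 𝒯.kleisli β α 𝔵 z :=
  le_iSup_of_le ⟨𝔛, h⟩ (le_iSup_of_le 𝔶 le_rfl)

lemma kleisli_le {X Y Z : Type u} (β : T Y → Z → V) (α : T X → Y → V)
    {𝔵 : T X} {z : Z} {c : V}
    (h : ∀ 𝔛 : T (T X), 𝒯.m 𝔛 = 𝔵 → ∀ 𝔶 : T Y,
      𝒯.tens (𝒯.Txi α 𝔛 𝔶) (β 𝔶 z) ≤ c) :
    𝒯.kleisli β α 𝔵 z ≤ c :=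
  iSup_le fun 𝔛 => iSup_le fun 𝔶 => h 𝔛.1 𝔛.2 𝔶

/-- Flatness of modules on legs lying over the unit of `T PUnit`. -/
lemma mod_flat {A Z : Type u} (as : 𝒯.TCatStr A) (cs : 𝒯.TCatStr Z)
    {ψ : T A → Z → V} (hψ : 𝒯.IsTModRel as.rel cs.rel ψ) (z : Z)
    (𝔄 : T (T A)) (h1 : 𝒯.map (fun _ => PUnit.unit.{u + 1}) 𝔄 = 𝒯.e PUnit.unit) :
    𝒯.xi (𝒯.map (fun 𝔞 => ψ 𝔞 z) 𝔄) ≤ ψ (𝒯.m 𝔄) z := by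
  have hsnd : 𝒯.map Prod.snd (𝒯.map (fun 𝔞 => (𝔞, z)) 𝔄) = 𝒯.e z := by
    rw [𝒯.map_map]
    have : (fun 𝔞 : T A => z) = (fun _ : PUnit.{u+1} => z) ∘ (fun _ => PUnit.unit) := rfl
    rw [this, 𝒯.map_comp, h1, 𝒯.e_nat]
  have hTxi : 𝒯.xi (𝒯.map (fun 𝔞 => ψ 𝔞 z) 𝔄) ≤ 𝒯.Txi ψ 𝔄 (𝒯.e z) := by
    refine le_trans (le_of_eq ?_) (𝒯.le_Txi ψ (𝒯.map (fun 𝔞 => (𝔞, z)) 𝔄)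
      (by rw [𝒯.map_map]; exact congrFun 𝒯.map_id 𝔄) hsnd)
    rw [𝒯.map_map]
  refine le_trans ?_ (hψ.2 (𝒯.m 𝔄) z)
  refine le_trans ?_ (𝒯.le_kleisli cs.rel ψ 𝔄 rfl (𝒯.e z))
  refine le_trans (le_of_eq (𝒯.tens_unit_right _).symm) ?_
  exact 𝒯.tens_le_tens hTxi (cs.le_refl z)

/-- One inequality of the associativity of Kleisli convolution. -/
lemma assoc1 {X Y A : Type u} (r : T X → Y → V) (s : T Y → A → V)
    (𝔛 : T (T X)) (𝔜 : T (T Y)) (𝔞 : T A) :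
    𝒯.tens (𝒯.Txi r 𝔛 (𝒯.m 𝔜)) (𝒯.Txi s 𝔜 𝔞) ≤
      ⨆ 𝔛' : {𝔛' : T (T X) // 𝒯.m 𝔛' = 𝒯.m 𝔛}, 𝒯.Txi (𝒯.kleisli s r) 𝔛'.1 𝔞 := by
  rw [Txi, 𝒯.tens_iSup_left]
  refine iSup_le fun 𝔴' => ?_
  obtain ⟨𝔴, hw1, hw2⟩ := 𝔴'
  rw [Txi, 𝒯.tens_iSup']
  refine iSup_le fun 𝔳' => ?_
  obtain ⟨𝔳, hv1, hv2⟩ := 𝔳'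
  obtain ⟨𝔚, hW1, hW2⟩ := 𝒯.m_bc Prod.snd 𝔜 𝔴 hw2.symm
  obtain ⟨𝔘, hU1, hU2⟩ := 𝒯.map_bc (𝒯.map Prod.snd) (Prod.fst : T Y × A → T Y) 𝔚 𝔳
    (by rw [hW1, hv1])
  refine le_trans ?_ (le_iSup_of_le
    ⟨𝒯.map Prod.fst (𝒯.map (fun q : {p : T (T X × Y) × (T Y × A) //
        𝒯.map Prod.snd p.1 = p.2.1} => (𝒯.m (𝒯.map Prod.fst q.1.1), q.1.2.2)) 𝔘), ?_⟩
    (𝒯.le_Txi (𝒯.kleisli s r) (𝒯.map (fun q : {p : T (T X × Y) × (T Y × A) //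
        𝒯.map Prod.snd p.1 = p.2.1} => (𝒯.m (𝒯.map Prod.fst q.1.1), q.1.2.2)) 𝔘) rfl ?_))
  · -- value inequality
    rw [𝒯.map_map]
    have hbound : ∀ q : {p : T (T X × Y) × (T Y × A) // 𝒯.map Prod.snd p.1 = p.2.1},
        𝒯.tens (𝒯.xi (𝒯.map (fun p : T X × Y => r p.1 p.2) q.1.1)) (s q.1.2.1 q.1.2.2)
          ≤ 𝒯.kleisli s r (𝒯.m (𝒯.map Prod.fst q.1.1)) q.1.2.2 := by
      intro q
      refine le_trans (𝒯.tens_le_tens (𝒯.le_Txi r q.1.1 rfl q.2) le_rfl) ?_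
      exact 𝒯.le_kleisli s r (𝒯.map Prod.fst q.1.1) rfl q.1.2.1
    refine le_trans (le_of_eq ?_) (𝒯.xi_mono _ _ hbound 𝔘)
    rw [𝒯.xi_map_tens]
    congr 1
    · have h5 : 𝒯.m (𝒯.map (fun q : {p : T (T X × Y) × (T Y × A) //
          𝒯.map Prod.snd p.1 = p.2.1} => q.1.1) 𝔘) = 𝔴 := by rw [hU1, hW2]
      have h6 := (𝒯.xi_collapse (fun q : {p : T (T X × Y) × (T Y × A) //
          𝒯.map Prod.snd p.1 = p.2.1} => q.1.1) (fun p : T X × Y => r p.1 p.2) 𝔘).symm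
      rw [h5] at h6
      exact h6
    · have h7 : 𝒯.map (fun p : T Y × A => s p.1 p.2) 𝔳
          = 𝒯.map (fun x : {p : T (T X × Y) × (T Y × A) //
              𝒯.map Prod.snd p.1 = p.2.1} => s x.1.2.1 x.1.2.2) 𝔘 := by
        rw [← hU2, 𝒯.map_map]
      exact congrArg 𝒯.xi h7
  · -- m-compatibility of the first leg
    rw [𝒯.map_map]
    have h4 : 𝒯.map (fun q : {p : T (T X × Y) × (T Y × A) //
          𝒯.map Prod.snd p.1 = p.2.1} =>
        ((𝒯.m (𝒯.map Prod.fst q.1.1), q.1.2.2) : T X × A).1) 𝔘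
        = 𝒯.map 𝒯.m (𝒯.map (𝒯.map Prod.fst) (𝒯.map (fun q => q.1.1) 𝔘)) := by
      rw [𝒯.map_map, 𝒯.map_map]
    rw [h4, hU1, ← 𝒯.m_assoc, ← 𝒯.m_nat, hW2, hw1]
  · -- snd leg
    have h8 : 𝒯.map Prod.snd 𝔳 = 𝔞 := hv2
    rw [𝒯.map_map, ← h8, ← hU2, 𝒯.map_map]

end Mod

section Colim

variable (𝒯 : TopTheory V T)

/-- Flatness of the composite `ψ ∘ h♭` over the unit. -/
lemma gz_flat {X A Z : Type u} (as : 𝒯.TCatStr A) (cs : 𝒯.TCatStr Z)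
    (h : A → T X → V) {ψ : T A → Z → V} (hψ : 𝒯.IsTModRel as.rel cs.rel ψ) (z : Z)
    (𝔛 : T (T X)) (hunit : 𝒯.map (fun _ => PUnit.unit.{u + 1}) 𝔛 = 𝒯.e PUnit.unit) :
    𝒯.xi (𝒯.map (fun 𝔵 => 𝒯.kleisli ψ (fun 𝔵' α => h α 𝔵') 𝔵 z) 𝔛) ≤
      𝒯.kleisli ψ (fun 𝔵' α => h α 𝔵') (𝒯.m 𝔛) z := by
  have hsingle : ∀ 𝔵, 𝒯.kleisli ψ (fun 𝔵' α => h α 𝔵') 𝔵 z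
      = ⨆ w : {w : T (T X) × T A // 𝒯.m w.1 = 𝔵},
          𝒯.tens (𝒯.Txi (fun 𝔵' α => h α 𝔵') w.1.1 w.1.2) (ψ w.1.2 z) := by
    intro 𝔵
    apply le_antisymm
    · exact 𝒯.kleisli_le _ _ fun 𝔛₀ h₀ 𝔞 => le_iSup_of_le ⟨(𝔛₀, 𝔞), h₀⟩ le_rfl
    · exact iSup_le fun w => 𝒯.le_kleisli ψ _ w.1.1 w.2 w.1.2
  refine le_trans (le_of_eq (Eq.trans
    (congrArg (fun f => 𝒯.xi (𝒯.map f 𝔛)) (funext hsingle))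
    (𝒯.xi_nat (fun w : T (T X) × T A => 𝒯.m w.1)
      (fun w => 𝒯.tens (𝒯.Txi (fun (𝔵' : T X) (α : A) => h α 𝔵') w.1 w.2) (ψ w.2 z))
      𝔛).symm)) (iSup_le fun 𝔚' => ?_)
  obtain ⟨𝔚, h𝔚⟩ := 𝔚'
  rw [𝒯.xi_map_tens]
  have hu : 𝒯.xi (𝒯.map (fun w : T (T X) × T A =>
        𝒯.Txi (fun 𝔵' α => h α 𝔵') w.1 w.2) 𝔚)
      ≤ 𝒯.Txi (fun 𝔵' α => h α 𝔵') (𝒯.m (𝒯.map Prod.fst 𝔚)) (𝒯.m (𝒯.map Prod.snd 𝔚)) :=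
    le_trans (𝒯.le_Txi (𝒯.Txi (fun 𝔵' α => h α 𝔵')) 𝔚 rfl rfl)
      (𝒯.Txi_Txi_le _ _ _)
  have hv : 𝒯.xi (𝒯.map (fun w : T (T X) × T A => ψ w.2 z) 𝔚)
      ≤ ψ (𝒯.m (𝒯.map Prod.snd 𝔚)) z := by
    have e1 : 𝒯.map (fun w : T (T X) × T A => ψ w.2 z) 𝔚
        = 𝒯.map (fun 𝔞 => ψ 𝔞 z) (𝒯.map Prod.snd 𝔚) := by rw [𝒯.map_map]
    rw [e1]
    refine 𝒯.mod_flat as cs hψ z (𝒯.map Prod.snd 𝔚) ?_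
    rw [𝒯.map_map, ← hunit, ← h𝔚, 𝒯.map_map]
  refine le_trans (𝒯.tens_le_tens hu hv) ?_
  refine 𝒯.le_kleisli ψ _ (𝒯.m (𝒯.map Prod.fst 𝔚)) ?_ (𝒯.m (𝒯.map Prod.snd 𝔚))
  rw [← h𝔚]
  have e2 : 𝒯.map (fun w : T (T X) × T A => 𝒯.m w.1) 𝔚
      = 𝒯.map 𝒯.m (𝒯.map Prod.fst 𝔚) := by rw [𝒯.map_map]
  rw [e2, ← 𝒯.m_assoc]

/-- `ψ ∘ h♭` is a presheaf. -/
lemma gz_presheaf {X A Z : Type u} (a : 𝒯.TCatStr X) (as : 𝒯.TCatStr A)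
    (cs : 𝒯.TCatStr Z) (h : A → Hat a) {ψ : T A → Z → V}
    (hψ : 𝒯.IsTModRel as.rel cs.rel ψ) (z : Z) :
    IsPresheaf a (fun 𝔵 => 𝒯.kleisli ψ (fun 𝔵' α => (h α).1 𝔵') 𝔵 z) := by
  constructor
  · -- left module condition
    intro 𝔵 u
    refine 𝒯.kleisli_le _ _ fun 𝔛 h𝔛 𝔶 => ?_
    show 𝒯.tens (𝒯.Txi a.rel 𝔛 𝔶) (𝒯.kleisli ψ (fun 𝔵' α => (h α).1 𝔵') 𝔶 z)
      ≤ 𝒯.kleisli ψ (fun 𝔵' α => (h α).1 𝔵') 𝔵 z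
    have hexp : 𝒯.kleisli ψ (fun (𝔵'' : T X) (α : A) => (h α).1 𝔵'') 𝔶 z
        = ⨆ 𝔜 : {𝔜 : T (T X) // 𝒯.m 𝔜 = 𝔶}, ⨆ 𝔞 : T A,
            𝒯.tens (𝒯.Txi (fun 𝔵'' α => (h α).1 𝔵'') 𝔜.1 𝔞) (ψ 𝔞 z) := rfl
    rw [hexp, 𝒯.tens_iSup']
    refine iSup_le fun 𝔜' => ?_
    rw [𝒯.tens_iSup']
    refine iSup_le fun 𝔞 => ?_
    obtain ⟨𝔜, rfl⟩ := 𝔜'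
    rw [← 𝒯.tens_assoc]
    have hstep := 𝒯.assoc1 a.rel (fun 𝔵'' α => (h α).1 𝔵'') 𝔛 𝔜 𝔞
    have hmono : (⨆ 𝔛' : {𝔛' : T (T X) // 𝒯.m 𝔛' = 𝒯.m 𝔛},
          𝒯.Txi (𝒯.kleisli (fun 𝔵'' α => (h α).1 𝔵'') a.rel) 𝔛'.1 𝔞)
        ≤ ⨆ 𝔛' : {𝔛' : T (T X) // 𝒯.m 𝔛' = 𝒯.m 𝔛},
            𝒯.Txi (fun 𝔵'' α => (h α).1 𝔵'') 𝔛'.1 𝔞 := by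
      refine iSup_mono fun 𝔛' => 𝒯.Txi_mono (fun 𝔵₀ α => ?_) _ 𝔞
      exact (h α).2.1 𝔵₀ PUnit.unit
    refine le_trans (𝒯.tens_le_tens (le_trans hstep hmono) le_rfl) ?_
    rw [𝒯.tens_iSup_left]
    refine iSup_le fun 𝔛' => ?_
    exact 𝒯.le_kleisli ψ _ 𝔛'.1 (by rw [𝔛'.2, h𝔛]) 𝔞
  · -- right module condition
    intro 𝔵 u
    refine 𝒯.kleisli_le _ _ fun 𝔛 h𝔛 𝔶 => ?_
    rw [unitRel, 𝒯.tens_iSup']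
    refine iSup_le fun h𝔶 => ?_
    rw [𝒯.tens_unit_right]
    refine 𝒯.Txi_le _ fun 𝔴 hw1 hw2 => ?_
    have hval : 𝒯.map (fun p : T X × PUnit.{u+1} =>
        𝒯.kleisli ψ (fun 𝔵' α => (h α).1 𝔵') p.1 z) 𝔴
        = 𝒯.map (fun 𝔵' => 𝒯.kleisli ψ (fun 𝔵'' α => (h α).1 𝔵'') 𝔵' z) 𝔛 := by
      rw [← hw1, 𝒯.map_map]
    rw [hval, ← h𝔛]
    refine 𝒯.gz_flat as cs (fun α => (h α).1) hψ z 𝔛 ?_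
    rw [← hw1, 𝒯.map_map]
    exact hw2.trans h𝔶

end Colim

section ColimMain

variable (𝒯 : TopTheory V T)

/-- Piece for the `≤` direction of the colimit formula. -/
lemma colim_le_piece {X A Z : Type u} (a : 𝒯.TCatStr X) (hs : 𝒯.TCatStr (Hat a))
    (hhs : IsHatStr a hs) (h : A → Hat a) (ψ : T A → Z → V) (g : Z → Hat a)
    (hg : ∀ (z : Z) (𝔵 : T X), (g z).1 𝔵 = 𝒯.kleisli ψ (fun 𝔵' α => (h α).1 𝔵') 𝔵 z)
    (𝔷 : T Z) (φx : Hat a) (𝔄 : T (T A)) (𝔴₂ : T (T A × Z))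
    (hA1 : 𝒯.map Prod.fst 𝔴₂ = 𝔄) (hA2 : 𝒯.map Prod.snd 𝔴₂ = 𝔷) :
    𝒯.tens (𝒯.xi (𝒯.map (fun p : T A × Z => ψ p.1 p.2) 𝔴₂)) (hs.rel (𝒯.map g 𝔷) φx)
      ≤ hs.rel (𝒯.map h (𝒯.m 𝔄)) φx := by
  rw [𝒯.hom_formula a hs hhs (𝒯.map h (𝒯.m 𝔄)) φx]
  refine le_iInf fun 𝔲 => ?_
  refine (𝒯.le_ihom_iff).mpr ?_
  obtain ⟨𝔲', hu1, hu2, hu3⟩ := 𝒯.bc_transfer h 𝔲.1 (𝒯.m 𝔄) 𝔲.2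
  obtain ⟨𝔘, hU1, hU2⟩ := 𝒯.m_bc Prod.snd 𝔄 𝔲' hu2.symm
  obtain ⟨𝔖, hS1, hS2⟩ := 𝒯.map_bc (𝒯.map Prod.snd) (Prod.fst : T A × Z → T A) 𝔘 𝔴₂
    (by rw [hU1, hA1])
  have hv2 : 𝒯.map Prod.snd (𝒯.map (fun q : {p : T (T X × A) × (T A × Z) //
        𝒯.map Prod.snd p.1 = p.2.1} => (𝒯.m (𝒯.map Prod.fst q.1.1), g q.1.2.2)) 𝔖)
      = 𝒯.map g 𝔷 := by
    rw [𝒯.map_map, ← hA2, ← hS2, 𝒯.map_map, 𝒯.map_map]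
  have hv1 : 𝒯.m (𝒯.map Prod.fst (𝒯.map (fun q : {p : T (T X × A) × (T A × Z) //
        𝒯.map Prod.snd p.1 = p.2.1} => (𝒯.m (𝒯.map Prod.fst q.1.1), g q.1.2.2)) 𝔖))
      = 𝒯.m (𝒯.map Prod.fst 𝔲.1) := by
    rw [𝒯.map_map]
    have e1 : 𝒯.map (fun q : {p : T (T X × A) × (T A × Z) //
          𝒯.map Prod.snd p.1 = p.2.1} =>
        ((𝒯.m (𝒯.map Prod.fst q.1.1), g q.1.2.2) : T X × Hat a).1) 𝔖
        = 𝒯.map 𝒯.m (𝒯.map (𝒯.map Prod.fst) (𝒯.map (fun q => q.1.1) 𝔖)) := by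
      rw [𝒯.map_map, 𝒯.map_map]
    rw [e1, hS1, ← 𝒯.m_assoc, ← 𝒯.m_nat, hU2, hu1]
  have hval : 𝒯.tens (𝒯.xi (𝒯.map (fun p : T X × Hat a => p.2.1 p.1) 𝔲.1))
        (𝒯.xi (𝒯.map (fun p : T A × Z => ψ p.1 p.2) 𝔴₂))
      ≤ 𝒯.xi (𝒯.map (fun p : T X × Hat a => p.2.1 p.1)
          (𝒯.map (fun q : {p : T (T X × A) × (T A × Z) //
            𝒯.map Prod.snd p.1 = p.2.1} =>
              (𝒯.m (𝒯.map Prod.fst q.1.1), g q.1.2.2)) 𝔖)) := by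
    rw [𝒯.map_map]
    have hbound : ∀ q : {p : T (T X × A) × (T A × Z) // 𝒯.map Prod.snd p.1 = p.2.1},
        𝒯.tens (𝒯.xi (𝒯.map (fun p : T X × A => (h p.2).1 p.1) q.1.1))
            (ψ q.1.2.1 q.1.2.2)
          ≤ (g q.1.2.2).1 (𝒯.m (𝒯.map Prod.fst q.1.1)) := by
      intro q
      rw [hg]
      refine le_trans (𝒯.tens_le_tens
        (𝒯.le_Txi (fun 𝔵' α => (h α).1 𝔵') q.1.1 rfl q.2) le_rfl) ?_
      exact 𝒯.le_kleisli ψ _ (𝒯.map Prod.fst q.1.1) rfl q.1.2.1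
    refine le_trans (le_of_eq ?_) (𝒯.xi_mono _ _ hbound 𝔖)
    rw [𝒯.xi_map_tens]
    congr 1
    · have h5 : 𝒯.m (𝒯.map (fun q : {p : T (T X × A) × (T A × Z) //
            𝒯.map Prod.snd p.1 = p.2.1} => q.1.1) 𝔖) = 𝔲' := by rw [hS1, hU2]
      have h6 := (𝒯.xi_collapse (fun q : {p : T (T X × A) × (T A × Z) //
          𝒯.map Prod.snd p.1 = p.2.1} => q.1.1)
          (fun p : T X × A => (h p.2).1 p.1) 𝔖).symm
      rw [h5] at h6
      exact Eq.trans (congrArg 𝒯.xi (hu3 (fun c 𝔵' => c.1 𝔵'))) h6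
    · have h7 : 𝒯.map (fun p : T A × Z => ψ p.1 p.2) 𝔴₂
          = 𝒯.map (fun q : {p : T (T X × A) × (T A × Z) //
              𝒯.map Prod.snd p.1 = p.2.1} => ψ q.1.2.1 q.1.2.2) 𝔖 := by
        rw [← hS2, 𝒯.map_map]
      exact congrArg 𝒯.xi h7
  have hstep : hs.rel (𝒯.map g 𝔷) φx
      ≤ 𝒯.ihom (𝒯.xi (𝒯.map (fun p : T X × Hat a => p.2.1 p.1)
          (𝒯.map (fun q : {p : T (T X × A) × (T A × Z) //
            𝒯.map Prod.snd p.1 = p.2.1} =>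
              (𝒯.m (𝒯.map Prod.fst q.1.1), g q.1.2.2)) 𝔖)))
        (φx.1 (𝒯.m (𝒯.map Prod.fst 𝔲.1))) := by
    rw [𝒯.hom_formula a hs hhs]
    refine le_trans (iInf_le _ ⟨𝒯.map (fun q : {p : T (T X × A) × (T A × Z) //
        𝒯.map Prod.snd p.1 = p.2.1} =>
          (𝒯.m (𝒯.map Prod.fst q.1.1), g q.1.2.2)) 𝔖, hv2⟩) (le_of_eq ?_)
    rw [hv1]
  rw [← 𝒯.tens_assoc]
  refine le_trans (𝒯.tens_le_tens hval (hstep)) ?_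
  exact 𝒯.tens_ihom_le _ _

/-- Piece for the `≥` direction of the colimit formula. -/
lemma colim_ge_piece {X A Z : Type u} (a : 𝒯.TCatStr X) (hs : 𝒯.TCatStr (Hat a))
    (hhs : IsHatStr a hs) (h : A → Hat a) (ψ : T A → Z → V) (g : Z → Hat a)
    (hg : ∀ (z : Z) (𝔵 : T X), (g z).1 𝔵 = 𝒯.kleisli ψ (fun 𝔵' α => (h α).1 𝔵') 𝔵 z)
    (𝔷 : T Z) (φx : Hat a) (𝔳 : T (T X × Hat a)) (h𝔳 : 𝒯.map Prod.snd 𝔳 = 𝒯.map g 𝔷) :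
    (⨅ 𝔞 : T A, 𝒯.ihom
        (⨆ 𝔄 : {𝔄 : T (T A) // 𝒯.m 𝔄 = 𝔞}, 𝒯.Txi ψ 𝔄.1 𝔷)
        (hs.rel (𝒯.map h 𝔞) φx))
      ≤ 𝒯.ihom (𝒯.xi (𝒯.map (fun p : T X × Hat a => p.2.1 p.1) 𝔳))
          (φx.1 (𝒯.m (𝒯.map Prod.fst 𝔳))) := by
  obtain ⟨𝔴g, hg1, hg2, hg3⟩ := 𝒯.bc_transfer g 𝔳 𝔷 h𝔳
  have hfun : (fun p : T X × Z => (g p.2).1 p.1)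
      = fun p => ⨆ w : {w : (T (T X) × T A) × Z // (𝒯.m w.1.1, w.2) = p},
          𝒯.tens (𝒯.Txi (fun (𝔵' : T X) (α : A) => (h α).1 𝔵') w.1.1.1 w.1.1.2)
            (ψ w.1.1.2 w.1.2) := by
    funext p
    obtain ⟨p1, p2⟩ := p
    rw [hg]
    apply le_antisymm
    · refine 𝒯.kleisli_le _ _ fun 𝔛₀ h₀ 𝔞₀ => ?_
      exact le_iSup_of_le ⟨((𝔛₀, 𝔞₀), p2), by rw [h₀]⟩ le_rfl
    · refine iSup_le fun w => ?_
      have h1 : 𝒯.m w.1.1.1 = p1 := congrArg Prod.fst w.2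
      have h2 : w.1.2 = p2 := congrArg Prod.snd w.2
      rw [h2]
      exact 𝒯.le_kleisli ψ _ w.1.1.1 h1 w.1.1.2
  have hnat : 𝒯.xi (𝒯.map (fun p : T X × Hat a => p.2.1 p.1) 𝔳)
      = ⨆ 𝔈 : {𝔈 : T ((T (T X) × T A) × Z) //
          𝒯.map (fun w => (𝒯.m w.1.1, w.2)) 𝔈 = 𝔴g},
        𝒯.xi (𝒯.map (fun w : (T (T X) × T A) × Z =>
          𝒯.tens (𝒯.Txi (fun (𝔵' : T X) (α : A) => (h α).1 𝔵') w.1.1 w.1.2)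
            (ψ w.1.2 w.2)) 𝔈.1) := by
    refine Eq.trans (congrArg 𝒯.xi (hg3 (fun c 𝔵' => c.1 𝔵'))) ?_
    refine Eq.trans (congrArg (fun f => 𝒯.xi (𝒯.map f 𝔴g)) hfun) ?_
    exact (𝒯.xi_nat (fun w : (T (T X) × T A) × Z => (𝒯.m w.1.1, w.2))
      (fun w => 𝒯.tens (𝒯.Txi (fun (𝔵' : T X) (α : A) => (h α).1 𝔵') w.1.1 w.1.2)
        (ψ w.1.2 w.2)) 𝔴g).symm
  rw [hnat, 𝒯.ihom_iSup]
  refine le_iInf fun 𝔈' => ?_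
  obtain ⟨E, hE⟩ := 𝔈'
  have hsplit := 𝒯.xi_map_tens
    (fun w : (T (T X) × T A) × Z =>
      𝒯.Txi (fun (𝔵' : T X) (α : A) => (h α).1 𝔵') w.1.1 w.1.2)
    (fun w => ψ w.1.2 w.2) E
  have hfactor1 : 𝒯.xi (𝒯.map (fun w : (T (T X) × T A) × Z =>
        𝒯.Txi (fun (𝔵' : T X) (α : A) => (h α).1 𝔵') w.1.1 w.1.2) E)
      ≤ 𝒯.Txi (fun 𝔵' α => (h α).1 𝔵')
          (𝒯.m (𝒯.map (fun w : (T (T X) × T A) × Z => w.1.1) E))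
          (𝒯.m (𝒯.map (fun w : (T (T X) × T A) × Z => w.1.2) E)) := by
    refine le_trans (le_of_eq ?_) (le_trans (𝒯.le_Txi
      (𝒯.Txi (fun 𝔵' α => (h α).1 𝔵'))
      (𝒯.map (fun w : (T (T X) × T A) × Z => w.1) E)
      (by rw [𝒯.map_map]) (by rw [𝒯.map_map])) (𝒯.Txi_Txi_le _ _ _))
    rw [𝒯.map_map]
  have hfactor2 : 𝒯.xi (𝒯.map (fun w : (T (T X) × T A) × Z => ψ w.1.2 w.2) E)
      ≤ 𝒯.Txi ψ (𝒯.map (fun w : (T (T X) × T A) × Z => w.1.2) E) 𝔷 := by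
    have e2 : 𝒯.xi (𝒯.map (fun w : (T (T X) × T A) × Z => ψ w.1.2 w.2) E)
        = 𝒯.xi (𝒯.map (fun p : T A × Z => ψ p.1 p.2)
            (𝒯.map (fun w : (T (T X) × T A) × Z => (w.1.2, w.2)) E)) := by
      rw [𝒯.map_map]
    rw [e2]
    refine 𝒯.le_Txi ψ _ (by rw [𝒯.map_map]) ?_
    rw [𝒯.map_map, ← hg2, ← hE, 𝒯.map_map]
  have hmfst : 𝒯.m (𝒯.map Prod.fst 𝔳)
      = 𝒯.m (𝒯.m (𝒯.map (fun w : (T (T X) × T A) × Z => w.1.1) E)) := by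
    rw [← hg1, ← hE, 𝒯.map_map, 𝒯.m_assoc, 𝒯.map_map]
  refine le_trans (iInf_le _ (𝒯.m (𝒯.map (fun w : (T (T X) × T A) × Z => w.1.2) E))) ?_
  refine le_trans (𝒯.ihom_le_ihom_left (le_iSup_of_le
    ⟨𝒯.map (fun w : (T (T X) × T A) × Z => w.1.2) E, rfl⟩ le_rfl) _) ?_
  refine (𝒯.le_ihom_iff).mpr ?_
  refine le_trans (le_of_eq (congrArg (fun t => 𝒯.tens t _) hsplit)) ?_
  refine le_trans (𝒯.tens_le_tens (𝒯.tens_le_tens hfactor1 hfactor2) le_rfl) ?_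
  rw [𝒯.tens_assoc]
  refine le_trans (𝒯.tens_le_tens le_rfl (𝒯.tens_ihom_le _ _)) ?_
  rw [Txi, 𝒯.tens_iSup_left]
  refine iSup_le fun 𝔴₂' => ?_
  obtain ⟨𝔴₂, hw1, hw2⟩ := 𝔴₂'
  have hcond : 𝒯.map Prod.snd (𝒯.map (fun p : T X × A => (p.1, h p.2)) 𝔴₂)
      = 𝒯.map h (𝒯.m (𝒯.map (fun w : (T (T X) × T A) × Z => w.1.2) E)) := by
    rw [𝒯.map_map, ← hw2, 𝒯.map_map]
  have hev2 : 𝒯.xi (𝒯.map (fun p : T X × Hat a => p.2.1 p.1)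
        (𝒯.map (fun p : T X × A => (p.1, h p.2)) 𝔴₂))
      = 𝒯.xi (𝒯.map (fun p : T X × A => (h p.2).1 p.1) 𝔴₂) := by
    rw [𝒯.map_map]
  have hm2 : 𝒯.m (𝒯.map Prod.fst (𝒯.map (fun p : T X × A => (p.1, h p.2)) 𝔴₂))
      = 𝒯.m (𝒯.map Prod.fst 𝔳) := by
    rw [𝒯.map_map]
    exact (congrArg 𝒯.m hw1).trans hmfst.symm
  have hhom : hs.rel (𝒯.map h (𝒯.m (𝒯.map (fun w : (T (T X) × T A) × Z => w.1.2) E))) φx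
      ≤ 𝒯.ihom (𝒯.xi (𝒯.map (fun p : T X × A => (h p.2).1 p.1) 𝔴₂))
          (φx.1 (𝒯.m (𝒯.map Prod.fst 𝔳))) := by
    rw [𝒯.hom_formula a hs hhs]
    refine le_trans (iInf_le _ ⟨𝒯.map (fun p : T X × A => (p.1, h p.2)) 𝔴₂, hcond⟩)
      (le_of_eq ?_)
    rw [hev2]
    exact congrArg (fun t => 𝒯.ihom
      (𝒯.xi (𝒯.map (fun p : T X × A => (h p.2).1 p.1) 𝔴₂)) (φx.1 t)) hm2
  refine le_trans (𝒯.tens_le_tens le_rfl hhom) ?_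
  exact 𝒯.tens_ihom_le _ _

/-- The colimit formula: `g_* = h_* ⟜ ψ` for `g = ψ ∘ h♭`. -/
lemma colim_extend {X A Z : Type u} (a : 𝒯.TCatStr X) (hs : 𝒯.TCatStr (Hat a))
    (hhs : IsHatStr a hs) (h : A → Hat a) (ψ : T A → Z → V) (g : Z → Hat a)
    (hg : ∀ (z : Z) (𝔵 : T X), (g z).1 𝔵 = 𝒯.kleisli ψ (fun 𝔵' α => (h α).1 𝔵') 𝔵 z)
    (𝔷 : T Z) (φx : Hat a) :
    hs.rel (𝒯.map g 𝔷) φx = 𝒯.extend (modStar hs h) ψ 𝔷 φx := by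
  apply le_antisymm
  · refine le_iInf fun 𝔞 => (𝒯.le_ihom_iff).mpr ?_
    rw [𝒯.tens_iSup_left]
    refine iSup_le fun 𝔄 => ?_
    rw [Txi, 𝒯.tens_iSup_left]
    refine iSup_le fun 𝔴 => ?_
    refine le_trans (𝒯.colim_le_piece a hs hhs h ψ g hg 𝔷 φx 𝔄.1 𝔴.1 𝔴.2.1 𝔴.2.2)
      (le_of_eq ?_)
    rw [𝔄.2]
    rfl
  · rw [𝒯.hom_formula a hs hhs (𝒯.map g 𝔷) φx]
    refine le_iInf fun 𝔳 => ?_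
    exact 𝒯.colim_ge_piece a hs hhs h ψ g hg 𝔷 φx 𝔳.1 𝔳.2

/-- The colimit is a `𝒯`-functor. -/
lemma colim_functor {X A Z : Type u} (a : 𝒯.TCatStr X) (hs : 𝒯.TCatStr (Hat a))
    (hhs : IsHatStr a hs) (as : 𝒯.TCatStr A) (cs : 𝒯.TCatStr Z) (h : A → Hat a)
    {ψ : T A → Z → V} (hψ : 𝒯.IsTModRel as.rel cs.rel ψ) (g : Z → Hat a)
    (hg : ∀ (z : Z) (𝔵 : T X), (g z).1 𝔵 = 𝒯.kleisli ψ (fun 𝔵' α => (h α).1 𝔵') 𝔵 z) :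
    IsTFunctor cs hs g := by
  intro 𝔷 z
  rw [𝒯.colim_extend a hs hhs h ψ g hg 𝔷 (g z)]
  refine le_iInf fun 𝔞 => (𝒯.le_ihom_iff).mpr ?_
  rw [𝒯.tens_iSup_left]
  refine iSup_le fun 𝔄 => ?_
  have hψz : 𝒯.tens (𝒯.Txi ψ 𝔄.1 𝔷) (cs.rel 𝔷 z) ≤ ψ 𝔞 z :=
    le_trans (𝒯.le_kleisli cs.rel ψ 𝔄.1 𝔄.2 𝔷) (hψ.2 𝔞 z)
  have hmain : ψ 𝔞 z ≤ hs.rel (𝒯.map h 𝔞) (g z) := by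
    rw [𝒯.hom_formula a hs hhs]
    refine le_iInf fun 𝔲 => (𝒯.le_ihom_iff).mpr ?_
    rw [hg]
    have hT := 𝒯.xi_ev_le_Txi h (fun c 𝔵' => c.1 𝔵') 𝔲.1 𝔞 𝔲.2
    refine le_trans (𝒯.tens_le_tens hT le_rfl) ?_
    exact 𝒯.le_kleisli ψ _ (𝒯.map Prod.fst 𝔲.1) rfl 𝔞
  exact le_trans hψz hmain

end ColimMain

section Adj

variable (𝒯 : TopTheory V T)

/-- Unit inequality: `Ψ ≤ (y ⋅ yinv) Ψ` pointwise. -/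
lemma unit_le {X : Type u} (a : 𝒯.TCatStr X) (hs : 𝒯.TCatStr (Hat a))
    (hhs : IsHatStr a hs) (y : X → Hat a) (hy : IsYoneda a y)
    (yinv : Hat hs → Hat a)
    (hyinv : ∀ (Ψ : Hat hs) (𝔵 : T X), (yinv Ψ).1 𝔵 = Ψ.1 (𝒯.map y 𝔵))
    (Ψ : Hat hs) (𝔯 : T (Hat a)) : Ψ.1 𝔯 ≤ hs.rel 𝔯 (yinv Ψ) := by
  rw [𝒯.hom_formula a hs hhs 𝔯 (yinv Ψ)]
  refine le_iInf fun 𝔳 => (𝒯.le_ihom_iff).mpr ?_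
  rw [hyinv]
  have hval : 𝒯.map (fun p : T X × Hat a => p.2.1 p.1) 𝔳.1
      = 𝒯.map (fun p : T (Hat a) × Hat a => hs.rel p.1 p.2)
          (𝒯.map (fun p : T X × Hat a => (𝒯.map y p.1, p.2)) 𝔳.1) := by
    rw [𝒯.map_map]
    exact congrArg (fun f => 𝒯.map f 𝔳.1)
      (funext fun p => (𝒯.yoneda_eval a hs hhs y hy p.1 p.2).symm)
  have hTxi : 𝒯.xi (𝒯.map (fun p : T X × Hat a => p.2.1 p.1) 𝔳.1)
      ≤ 𝒯.Txi hs.rel (𝒯.map (𝒯.map y) (𝒯.map Prod.fst 𝔳.1)) 𝔯 := by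
    rw [hval]
    refine 𝒯.le_Txi hs.rel _ (by rw [𝒯.map_map, 𝒯.map_map]) ?_
    rw [𝒯.map_map]
    exact 𝔳.2
  refine le_trans (𝒯.tens_le_tens hTxi le_rfl) ?_
  refine le_trans (𝒯.le_kleisli (z := PUnit.unit) (fun 𝔭 (_ : PUnit.{u+1}) => Ψ.1 𝔭) hs.rel
    (𝒯.map (𝒯.map y) (𝒯.map Prod.fst 𝔳.1)) (𝒯.m_nat y (𝒯.map Prod.fst 𝔳.1)).symm 𝔯) ?_
  exact Ψ.2.1 (𝒯.map y (𝒯.m (𝒯.map Prod.fst 𝔳.1))) PUnit.unit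

/-- `yinv` is a `𝒯`-functor. -/
lemma yinv_functor {X : Type u} (a : 𝒯.TCatStr X) (hs : 𝒯.TCatStr (Hat a))
    (hhs : IsHatStr a hs) (hs2 : 𝒯.TCatStr (Hat hs)) (hhs2 : IsHatStr hs hs2)
    (y : X → Hat a) (yinv : Hat hs → Hat a)
    (hyinv : ∀ (Ψ : Hat hs) (𝔵 : T X), (yinv Ψ).1 𝔵 = Ψ.1 (𝒯.map y 𝔵)) :
    IsTFunctor hs2 hs yinv := by
  intro 𝔓 Ψ
  rw [𝒯.hom_formula hs hs2 hhs2 𝔓 Ψ,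
    𝒯.hom_formula a hs hhs (𝒯.map yinv 𝔓) (yinv Ψ)]
  refine le_iInf fun 𝔳 => ?_
  obtain ⟨𝔴, h1, h2, h3⟩ := 𝒯.bc_transfer yinv 𝔳.1 𝔓 𝔳.2
  have hcond : 𝒯.map Prod.snd
      (𝒯.map (fun p : T X × Hat hs => (𝒯.map y p.1, p.2)) 𝔴) = 𝔓 := by
    rw [𝒯.map_map, ← h2]
  refine le_trans (iInf_le _ ⟨𝒯.map (fun p : T X × Hat hs => (𝒯.map y p.1, p.2)) 𝔴,
    hcond⟩) (le_of_eq ?_)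
  have hev : 𝒯.map (fun p : T (Hat a) × Hat hs => p.2.1 p.1)
      (𝒯.map (fun p : T X × Hat hs => (𝒯.map y p.1, p.2)) 𝔴)
      = 𝒯.map (fun p : T X × Hat a => p.2.1 p.1) 𝔳.1 := by
    rw [𝒯.map_map, h3 (fun c 𝔵' => c.1 𝔵')]
    exact congrArg (fun f => 𝒯.map f 𝔴)
      (funext fun p => (hyinv p.2 p.1).symm)
  have hm : 𝒯.m (𝒯.map Prod.fst
      (𝒯.map (fun p : T X × Hat hs => (𝒯.map y p.1, p.2)) 𝔴))
      = 𝒯.map y (𝒯.m (𝒯.map Prod.fst 𝔳.1)) := by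
    rw [𝒯.map_map, ← h1]
    have e1 : 𝒯.map (fun p : T X × Hat hs => (𝒯.map y p.1, p.2).1) 𝔴
        = 𝒯.map (𝒯.map y) (𝒯.map Prod.fst 𝔴) := by rw [𝒯.map_map]
    rw [e1, ← 𝒯.m_nat]
  rw [hev, hm, hyinv]

end Adj
/-- Theorem 2.6. For every `𝒯`-category `X`, the presheaf
`𝒯`-category `X̂` is cocomplete; more precisely, the `𝒯`-functor
`y_X⁻¹ : (X̂)^ → X̂`, `ψ ↦ ψ ∘ (y_X)_*`, satisfies `y_X⁻¹ · y_{X̂} = 1_{X̂}` and is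
left adjoint to `y_{X̂}`. -/
theorem statement3 (𝒯 : TopTheory V T) {X : Type u} (a : 𝒯.TCatStr X)
    (hs : 𝒯.TCatStr (Hat a)) (hhs : IsHatStr a hs)
    (hs2 : 𝒯.TCatStr (Hat hs)) (hhs2 : IsHatStr hs hs2)
    (y : X → Hat a) (hy : IsYoneda a y)
    (y' : Hat a → Hat hs) (hy' : IsYoneda hs y') (hy'f : IsTFunctor hs hs2 y')
    (yinv : Hat hs → Hat a)
    (hyinv : ∀ (Ψ : Hat hs) (𝔵 : T X), (yinv Ψ).1 𝔵 = Ψ.1 (𝒯.map y 𝔵)) :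
    Cocomplete hs ∧ (∀ Ψ : Hat a, yinv (y' Ψ) = Ψ) ∧
      IsTFunctor hs2 hs yinv ∧ IsAdjunction hs2 hs yinv y' := by
  have part2 : ∀ Ψ : Hat a, yinv (y' Ψ) = Ψ := by
    intro Ψ
    apply Subtype.ext
    funext 𝔵
    rw [hyinv, hy', 𝒯.yoneda_eval a hs hhs y hy]
  refine ⟨?_, part2, 𝒯.yinv_functor a hs hhs hs2 hhs2 y yinv hyinv, ?_, ?_⟩
  · intro A Z as cs h hfun ψ hψ
    refine ⟨fun z => ⟨fun 𝔵 => 𝒯.kleisli ψ (fun 𝔵' α => (h α).1 𝔵') 𝔵 z,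
        𝒯.gz_presheaf a as cs h hψ z⟩, ?_, ?_⟩
    · exact 𝒯.colim_functor a hs hhs as cs h hψ _ (fun z 𝔵 => rfl)
    · exact fun 𝔷 x => 𝒯.colim_extend a hs hhs h ψ _ (fun z 𝔵 => rfl) 𝔷 x
  · intro 𝔓 Ψ
    rw [𝒯.hom_formula hs hs2 hhs2 𝔓 Ψ, 𝒯.hom_formula hs hs2 hhs2 𝔓 (y' (yinv Ψ))]
    refine iInf_mono fun 𝔙 => 𝒯.ihom_le_ihom_right _ ?_
    rw [hy']
    exact 𝒯.unit_le a hs hhs y hy yinv hyinv Ψ _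
  · intro 𝔭 ψ0
    rw [part2 ψ0]

end TopTheory

end Paper
end
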